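/- Let T, μ ∈ ℝ and σ > 0, and let X be a real random variable distributed as the Gaussian N(μ, σ²). Then the expected improvement E[max(T − X, 0)] equals Δ·Φ(Δ/σ) + σ·φ(Δ/σ), where Δ = T − μ. -/

import Mathlib

open MeasureTheory ProbabilityTheory Real

/-- The standard normal density `φ(t) = (2π)^{-1/2} exp(−t²/2)`. -/
noncomputable def stdGaussianPDF (t : ℝ) : ℝ :=
  (Real.sqrt (2 * Real.pi))⁻¹ * Real.exp (-t ^ 2 / 2)

/-- The standard normal CDF `Φ(t) = ∫_{−∞}^{t} φ(s) ds`. -/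
noncomputable def stdGaussianCDF (t : ℝ) : ℝ :=
  ∫ s in Set.Iic t, stdGaussianPDF s

lemma stdGaussianPDF_eq : stdGaussianPDF = gaussianPDFReal 0 1 := by
  ext t
  simp [stdGaussianPDF, gaussianPDFReal]

lemma stdGaussianPDF_nonneg (t : ℝ) : 0 ≤ stdGaussianPDF t := by
  rw [stdGaussianPDF_eq]; exact gaussianPDFReal_nonneg 0 1 t

lemma integrable_stdGaussianPDF : Integrable stdGaussianPDF := by
  rw [stdGaussianPDF_eq]; exact integrable_gaussianPDFReal 0 1

lemma integrable_mul_stdGaussianPDF : Integrable (fun t => t * stdGaussianPDF t) := by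
  have h : Integrable (fun t : ℝ => t * Real.exp (-(1/2 : ℝ) * t ^ 2)) :=
    integrable_mul_exp_neg_mul_sq (by norm_num)
  have heq : (fun t : ℝ => t * stdGaussianPDF t)
      = fun t : ℝ => (Real.sqrt (2 * Real.pi))⁻¹ * (t * Real.exp (-(1/2 : ℝ) * t ^ 2)) := by
    funext t
    simp only [stdGaussianPDF]
    ring_nf
  rw [heq]
  exact h.const_mul _

lemma hasDerivAt_neg_stdGaussianPDF (t : ℝ) :
    HasDerivAt (fun s => -stdGaussianPDF s) (t * stdGaussianPDF t) t := by
  have h1 : HasDerivAt (fun s : ℝ => -s ^ 2 / 2) (-t) t := by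
    have := ((hasDerivAt_pow 2 t).neg).div_const 2
    simpa using this.congr_deriv (by ring)
  have h2 := (h1.exp).const_mul ((Real.sqrt (2 * Real.pi))⁻¹)
  have h3 := h2.neg
  refine h3.congr_deriv ?_
  simp only [stdGaussianPDF]
  ring

lemma tendsto_stdGaussianPDF_atBot :
    Filter.Tendsto (fun t => -stdGaussianPDF t) Filter.atBot (nhds 0) := by
  have hsq : Filter.Tendsto (fun t : ℝ => t ^ 2) Filter.atBot Filter.atTop := by
    have := (Filter.tendsto_pow_atTop (α := ℝ) (n := 2) two_ne_zero).comp
      (Filter.tendsto_neg_atBot_atTop (G := ℝ))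
    refine this.congr fun t => ?_
    simp [Function.comp, neg_pow]
  have h1 : Filter.Tendsto (fun t : ℝ => -t ^ 2 / 2) Filter.atBot Filter.atBot := by
    apply Filter.Tendsto.atBot_div_const (by norm_num)
    exact Filter.tendsto_neg_atTop_atBot.comp hsq
  have h2 := Real.tendsto_exp_atBot.comp h1
  have h3 := (h2.const_mul ((Real.sqrt (2 * Real.pi))⁻¹)).neg
  simpa [stdGaussianPDF] using h3

lemma integral_Iic_mul_stdGaussianPDF (z : ℝ) :
    ∫ t in Set.Iic z, t * stdGaussianPDF t = -stdGaussianPDF z := by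
  have := integral_Iic_of_hasDerivAt_of_tendsto' (a := z)
    (fun x _ => hasDerivAt_neg_stdGaussianPDF x)
    (integrable_mul_stdGaussianPDF.integrableOn)
    tendsto_stdGaussianPDF_atBot
  simpa using this

/-- Closed form of the expected improvement: if `X ~ N(μ, σ²)` then
`E[max (T − X) 0] = Δ Φ(Δ/σ) + σ φ(Δ/σ)` where `Δ = T − μ`. -/
theorem expected_improvement_closed_form
    {Ω : Type*} [MeasureSpace Ω] [IsProbabilityMeasure (ℙ : Measure Ω)]
    (X : Ω → ℝ) (T μ σ : ℝ) (hσ : 0 < σ)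
    (hX : Measure.map X ℙ = gaussianReal μ (Real.toNNReal (σ ^ 2))) :
    ∫ ω, max (T - X ω) 0 ∂ℙ =
      (T - μ) * stdGaussianCDF ((T - μ) / σ) + σ * stdGaussianPDF ((T - μ) / σ) := by
  set Δ := T - μ with hΔ
  set z := Δ / σ with hz
  have hXm : AEMeasurable X ℙ := by
    apply aemeasurable_of_map_neZero
    rw [hX]
    infer_instance
  have hgm : Measurable (fun x : ℝ => max (T - x) 0) :=
    (measurable_const.sub measurable_id).max measurable_const
  -- Step 1: transfer to the Gaussian law
  have h1 : ∫ ω, max (T - X ω) 0 ∂ℙ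
      = ∫ x, max (T - x) 0 ∂(gaussianReal μ (Real.toNNReal (σ ^ 2))) := by
    rw [← hX, integral_map hXm hgm.aestronglyMeasurable]
  -- Step 2: the Gaussian law is the image of the standard Gaussian
  have hmap : gaussianReal μ (Real.toNNReal (σ ^ 2))
      = Measure.map (fun t : ℝ => σ * t + μ) (gaussianReal 0 1) := by
    have : (fun t : ℝ => σ * t + μ) = (fun x : ℝ => x + μ) ∘ (fun x : ℝ => σ * x) := rfl
    rw [this, ← Measure.map_map (measurable_id'.add_const μ) (measurable_const_mul σ),
      gaussianReal_map_const_mul, gaussianReal_map_add_const]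
    congr 1
    · ring
    · rw [mul_one]
      refine NNReal.coe_injective ?_
      simp [Real.coe_toNNReal _ (sq_nonneg σ)]
  have h2 : ∫ x, max (T - x) 0 ∂(gaussianReal μ (Real.toNNReal (σ ^ 2)))
      = ∫ t, max (Δ - σ * t) 0 ∂(gaussianReal 0 1) := by
    rw [hmap, integral_map ((measurable_const_mul σ).add_const μ).aemeasurable
      hgm.aestronglyMeasurable]
    congr 1 with t
    congr 1
    ring
  -- Step 3: write the Gaussian integral as a Lebesgue integral with density
  have h3 : ∫ t, max (Δ - σ * t) 0 ∂(gaussianReal 0 1)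
      = ∫ t, max (Δ - σ * t) 0 * stdGaussianPDF t := by
    rw [gaussianReal_of_var_ne_zero 0 one_ne_zero, gaussianPDF_def]
    have hd : (fun x => ENNReal.ofReal (gaussianPDFReal 0 1 x))
        = fun x => ((Real.toNNReal (gaussianPDFReal 0 1 x) : NNReal) : ENNReal) := rfl
    rw [hd, integral_withDensity_eq_integral_smul
      (measurable_gaussianPDFReal 0 1).real_toNNReal]
    congr 1 with t
    rw [NNReal.smul_def, smul_eq_mul, Real.coe_toNNReal _ (gaussianPDFReal_nonneg 0 1 t),
      ← stdGaussianPDF_eq]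
    ring
  -- Step 4: the integrand is an indicator
  have h4 : (fun t => max (Δ - σ * t) 0 * stdGaussianPDF t)
      = Set.indicator (Set.Iic z) (fun t => (Δ - σ * t) * stdGaussianPDF t) := by
    ext t
    by_cases ht : t ≤ z
    · rw [Set.indicator_of_mem (Set.mem_Iic.mpr ht)]
      congr 1
      rw [max_eq_left]
      rw [hz, le_div_iff₀ hσ] at ht
      nlinarith
    · rw [Set.indicator_of_notMem (by simpa using ht)]
      rw [max_eq_right, zero_mul]
      push_neg at ht
      rw [hz, div_lt_iff₀ hσ] at ht
      nlinarith
  -- Step 5: compute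
  have hint1 : IntegrableOn (fun t => Δ * stdGaussianPDF t) (Set.Iic z) :=
    (integrable_stdGaussianPDF.const_mul Δ).integrableOn
  have hint2 : IntegrableOn (fun t => σ * (t * stdGaussianPDF t)) (Set.Iic z) :=
    (integrable_mul_stdGaussianPDF.const_mul σ).integrableOn
  rw [h1, h2, h3, h4, integral_indicator measurableSet_Iic]
  have h5 : ∀ t : ℝ, (Δ - σ * t) * stdGaussianPDF t
      = Δ * stdGaussianPDF t - σ * (t * stdGaussianPDF t) := fun t => by ring
  simp_rw [h5]
  rw [integral_sub hint1 hint2, integral_const_mul, integral_const_mul,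
    integral_Iic_mul_stdGaussianPDF]
  rw [stdGaussianCDF]
  ring
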